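/- In the word w_n = y₀x₁x₂y₀ (∏_{i=1}^n y_i x_{i+2} y_i) y_{n+1} x_{n+3} x_{n+4} y_{n+1}, every factor (contiguous subword) of length greater than 1 occurs exactly once in w_n. -/

import Mathlib

/-- The letter `xᵢ`. -/
def X (i : ℕ) : ℕ ⊕ ℕ := Sum.inl i

/-- The letter `yᵢ`. -/
def Y (i : ℕ) : ℕ ⊕ ℕ := Sum.inr i

/-- The word `wₙ = y₀x₁x₂y₀ (∏_{i=1}^n yᵢx_{i+2}yᵢ) y_{n+1}x_{n+3}x_{n+4}y_{n+1}`. -/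
def wordW (n : ℕ) : List (ℕ ⊕ ℕ) :=
  [Y 0, X 1, X 2, Y 0] ++
  ((List.range n).flatMap fun k => [Y (k+1), X (k+3), Y (k+1)]) ++
  [Y (n+1), X (n+3), X (n+4), Y (n+1)]

/-- The number of occurrences of `u` as a factor of `w`: the number of
positions of `w` at which `u` appears. -/
def occCount (u w : List (ℕ ⊕ ℕ)) : ℕ :=
  ((List.range (w.length + 1)).filter fun i => decide (u <+: w.drop i)).length

/-- Decoder: from an adjacent pair of letters of `wₙ`, recover its position. -/
def dec : (ℕ ⊕ ℕ) × (ℕ ⊕ ℕ) → ℕ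
  | (Sum.inl a, Sum.inl _) => if a = 1 then 1 else 3*a - 4
  | (Sum.inl a, Sum.inr k) => if a = k+2 then 3*k+2 else 3*k+3
  | (Sum.inr k, Sum.inl _) => if k = 0 then 0 else 3*k+1
  | (Sum.inr k, Sum.inr _) => 3*k+3

/-- The list of adjacent pairs of a word. -/
def pairs (l : List (ℕ ⊕ ℕ)) : List ((ℕ ⊕ ℕ) × (ℕ ⊕ ℕ)) := l.zip l.tail

@[simp] lemma pairs_nil : pairs [] = [] := rfl
@[simp] lemma pairs_single (a : ℕ ⊕ ℕ) : pairs [a] = [] := rfl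
@[simp] lemma pairs_cons_cons (a b : ℕ ⊕ ℕ) (l : List (ℕ ⊕ ℕ)) :
    pairs (a :: b :: l) = (a, b) :: pairs (b :: l) := rfl

lemma pairs_tail (l : List (ℕ ⊕ ℕ)) : (pairs l).tail = pairs l.tail := by
  match l with
  | [] => rfl
  | [a] => rfl
  | a :: b :: l => rfl

lemma pairs_drop (i : ℕ) (l : List (ℕ ⊕ ℕ)) : (pairs l).drop i = pairs (l.drop i) := by
  induction i generalizing l with
  | zero => rfl
  | succ i ih =>
    rw [← List.tail_drop, ← List.tail_drop, ih, pairs_tail]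

/-- The chain of blocks `y_{s+1}x_{s+3}y_{s+1} ⋯ y_{s+m}x_{s+m+2}y_{s+m}` followed by `t`. -/
def chain : ℕ → ℕ → List (ℕ ⊕ ℕ) → List (ℕ ⊕ ℕ)
  | _, 0, t => t
  | s, m+1, t => Y (s+1) :: X (s+3) :: Y (s+1) :: chain (s+1) m t

lemma chain_snoc (s m : ℕ) (t : List (ℕ ⊕ ℕ)) :
    chain s (m+1) t = chain s m (Y (s+m+1) :: X (s+m+3) :: Y (s+m+1) :: t) := by
  induction m generalizing s with
  | zero => simp [chain]
  | succ m ih =>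
    show Y (s+1) :: X (s+3) :: Y (s+1) :: chain (s+1) (m+1) t = _
    rw [ih (s+1)]
    have h1 : s+1+m+1 = s+(m+1)+1 := by omega
    have h2 : s+1+m+3 = s+(m+1)+3 := by omega
    rw [show chain s (m+1) (Y (s+(m+1)+1) :: X (s+(m+1)+3) :: Y (s+(m+1)+1) :: t)
        = Y (s+1) :: X (s+3) :: Y (s+1) ::
          chain (s+1) m (Y (s+(m+1)+1) :: X (s+(m+1)+3) :: Y (s+(m+1)+1) :: t) from rfl,
      h1, h2]

lemma flat_chain (m : ℕ) (t : List (ℕ ⊕ ℕ)) :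
    ((List.range m).flatMap fun k => [Y (k+1), X (k+3), Y (k+1)]) ++ t = chain 0 m t := by
  induction m generalizing t with
  | zero => simp [chain]
  | succ m ih =>
    rw [List.range_succ, List.flatMap_append]
    simp only [List.flatMap_cons, List.flatMap_nil, List.append_nil, List.append_assoc,
      List.cons_append, List.nil_append]
    rw [ih, chain_snoc]
    simp

lemma wordW_eq (n : ℕ) :
    wordW n = Y 0 :: X 1 :: X 2 :: Y 0 ::
      chain 0 n [Y (n+1), X (n+3), X (n+4), Y (n+1)] := by
  rw [wordW, List.append_assoc, flat_chain]
  rfl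

lemma range'_four (k : ℕ) : List.range' k 4 = [k, k+1, k+2, k+3] := by
  simp [List.range'_succ]

lemma pairs_chain_map (m s : ℕ) (t : List (ℕ ⊕ ℕ)) :
    (pairs (Y s :: chain s m t)).map dec
      = List.range' (3*s+3) (3*m) ++ (pairs (Y (s+m) :: t)).map dec := by
  induction m generalizing s with
  | zero => simp [chain]
  | succ m ih =>
    show (pairs (Y s :: Y (s+1) :: X (s+3) :: Y (s+1) :: chain (s+1) m t)).map dec = _
    rw [pairs_cons_cons, pairs_cons_cons, pairs_cons_cons, List.map_cons, List.map_cons,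
      List.map_cons, ih (s+1)]
    have d1 : dec (Y s, Y (s+1)) = 3*s+3 := by simp [dec, Y]
    have d2 : dec (Y (s+1), X (s+3)) = 3*s+4 := by simp [dec, Y, X]; omega
    have d3 : dec (X (s+3), Y (s+1)) = 3*s+5 := by simp [dec, Y, X]; omega
    rw [d1, d2, d3]
    rw [show 3*(m+1) = ((3*m)+1+1+1) from by omega,
      List.range'_succ, List.range'_succ, List.range'_succ]
    have e1 : 3*s+3+1 = 3*s+4 := by omega
    have e2 : 3*s+4+1 = 3*s+5 := by omega
    have e3 : 3*s+5+1 = 3*(s+1)+3 := by omega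
    have e4 : s+1+m = s+(m+1) := by omega
    rw [e1, e2, e3, e4]
    simp

lemma pairs_map_eq (n : ℕ) :
    (pairs (wordW n)).map dec = List.range' 0 (3*n+7) := by
  rw [wordW_eq]
  rw [pairs_cons_cons, pairs_cons_cons, pairs_cons_cons, List.map_cons, List.map_cons,
    List.map_cons, pairs_chain_map]
  have d0 : dec (Y 0, X 1) = 0 := by simp [dec, Y, X]
  have d1 : dec (X 1, X 2) = 1 := by simp [dec, Y, X]
  have d2 : dec (X 2, Y 0) = 2 := by simp [dec, Y, X]
  rw [d0, d1, d2]
  have htail : (pairs (Y (0+n) :: [Y (n+1), X (n+3), X (n+4), Y (n+1)])).map dec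
      = List.range' (3*n+3) 4 := by
    rw [range'_four]
    simp only [Nat.zero_add]
    have e0 : dec (Y n, Y (n+1)) = 3*n+3 := by simp [dec, Y]
    have e1 : dec (Y (n+1), X (n+3)) = 3*n+3+1 := by simp [dec, Y, X]; omega
    have e2 : dec (X (n+3), X (n+4)) = 3*n+3+2 := by simp [dec, X]; omega
    have e3 : dec (X (n+4), Y (n+1)) = 3*n+3+3 := by simp [dec, X, Y]; omega
    simp [pairs_cons_cons, e0, e1, e2, e3]
  rw [htail]
  have h1 : List.range' 3 (3*n) ++ List.range' (3+1*(3*n)) 4 = List.range' 3 (4+3*n) :=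
    by rw [List.range'_append, Nat.add_comm]
  rw [show 3*n+3 = 3+1*(3*n) from by omega] at htail ⊢
  rw [show (3:ℕ)*0+3 = 3 from by omega, h1]
  have h2 : List.range' 0 3 ++ List.range' (0+1*3) (4+3*n) = List.range' 0 ((4+3*n)+3) :=
    by rw [List.range'_append, Nat.add_comm]
  rw [show List.range' 0 3 = [0,1,2] from by simp [List.range'_succ]] at h2
  rw [show (0+1*3 : ℕ) = 3 from by omega] at h2
  rw [show ((0:ℕ) :: 1 :: 2 :: (List.range' 3 (4+3*n)))
      = [0,1,2] ++ List.range' 3 (4+3*n) from rfl, h2]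
  congr 1
  omega

lemma pairs_nodup (n : ℕ) : (pairs (wordW n)).Nodup :=
  List.Nodup.of_map dec (by rw [pairs_map_eq]; exact List.nodup_range' (h := Nat.one_pos))

lemma pos_unique (n : ℕ) (a b : ℕ ⊕ ℕ) (u : List (ℕ ⊕ ℕ)) (i j : ℕ)
    (hi : (a :: b :: u) <+: (wordW n).drop i)
    (hj : (a :: b :: u) <+: (wordW n).drop j) : i = j := by
  have key : ∀ k : ℕ, (a :: b :: u) <+: (wordW n).drop k →
      (pairs (wordW n))[k]? = some (a, b) := by
    intro k hk
    obtain ⟨r, hr⟩ := hk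
    rw [← List.head?_drop, pairs_drop, ← hr]
    rfl
  have hk1 := key i hi
  have hk2 := key j hj
  have hlt : i < (pairs (wordW n)).length := by
    by_contra h
    rw [List.getElem?_eq_none (by omega)] at hk1
    simp at hk1
  exact (List.getElem?_inj hlt (pairs_nodup n)).1 (hk1.trans hk2.symm)

/-- Every factor of `wₙ` of length greater than `1` occurs exactly once. -/
theorem stmt10 (n : ℕ) (hn : 1 ≤ n) :
    ∀ u : List (ℕ ⊕ ℕ), 2 ≤ u.length → u <:+: wordW n →
      occCount u (wordW n) = 1 := by
  intro u hlen hfac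
  match u, hlen with
  | a :: b :: v, _ =>
  obtain ⟨s, t, hw⟩ := hfac
  set w := wordW n with hwdef
  have hp : (a :: b :: v) <+: w.drop s.length := by
    rw [← hw, List.append_assoc, List.drop_left]
    exact ⟨t, rfl⟩
  have hmem : s.length ∈ List.range (w.length + 1) := by
    rw [List.mem_range]
    have : s.length ≤ w.length := by
      rw [← hw]; simp
    omega
  have hcongr : ∀ j ∈ List.range (w.length + 1),
      (decide ((a :: b :: v) <+: w.drop j)) = (j == s.length) := by
    intro j _
    by_cases h : (a :: b :: v) <+: w.drop j
    · have hje := pos_unique n a b v j s.length h hp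
      subst hje
      simp [h]
    · have : j ≠ s.length := fun he => h (he ▸ hp)
      simp [h, this]
  rw [occCount, List.filter_congr hcongr, ← List.countP_eq_length_filter]
  rw [show (List.countP (fun j => j == s.length) (List.range (w.length + 1)))
      = List.count s.length (List.range (w.length + 1)) from rfl]
  exact List.count_eq_one_of_mem List.nodup_range hmem
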